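/- Let s = 4 (so s′ = 3), let n ≥ 0, let 0 ≤ x ≤ 4^n and 0 ≤ y ≤ 2·4^n − x. Then c_n(4, x, 3x + y) = Σ_{i,j,k ≥ 0, i+2j+k=y} C(x, i) · C(4^n − x, j) · C(4^n − x − j, k) · 4^{x − i + k} · 6^{j}, where binomial coefficients C(a,b) vanish when b > a. -/

import Mathlib

/-- `s' = ⌈(s+1)/2⌉`, the strict-majority threshold for group size `s`. -/
def sPrime (s : ℕ) : ℕ := (s + 2) / 2

/-- Number of entries equal to `+1` (encoded as `true`) in a configuration. -/
def cfgCard {m : ℕ} (X : Fin m → Bool) : ℕ :=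
  (Finset.univ.filter fun i => X i = true).card

/-- The one-step induction map `π` sending a level-`(n+1)` configuration to a
level-`n` configuration by the majority rule with ties resolved in favor of `-1`. -/
def piMap (s n : ℕ) (Z : Fin (s ^ (n + 1)) → Bool) : Fin (s ^ n) → Bool :=
  fun i => decide (sPrime s ≤ (Finset.univ.filter fun j : Fin s =>
    Z ⟨s * (i : ℕ) + (j : ℕ), by
      have h1 : (i : ℕ) + 1 ≤ s ^ n := i.isLt
      have h2 : (j : ℕ) < s := j.isLt
      have h3 : s * ((i : ℕ) + 1) ≤ s * s ^ n := Nat.mul_le_mul_left _ h1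
      have h4 : s * ((i : ℕ) + 1) = s * (i : ℕ) + s := by ring
      have h5 : s ^ (n + 1) = s * s ^ n := by rw [pow_succ, Nat.mul_comm]
      omega⟩ = true).card)


/-- `c_n(s, X, z)`: the number of level-`(n+1)` configurations `Z` with
`card Z = z` and `πZ = X`. -/
def cCount (s n : ℕ) (X : Fin (s ^ n) → Bool) (z : ℕ) : ℕ :=
  (Finset.univ.filter fun Z : Fin (s ^ (n + 1)) → Bool =>
    cfgCard Z = z ∧ piMap s n Z = X).card

/-- The standard configuration with the first `x` entries equal to `+1`. -/
def stdCfg (m x : ℕ) : Fin m → Bool := fun i => decide ((i : ℕ) < x)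

/-- `c_n(s, x, z) := c_n(s, X_x, z)` where `X_x` is the standard level-`n`
configuration with `x` entries equal to `+1`. -/
def cFix (s n x z : ℕ) : ℕ := cCount s n (stdCfg (s ^ n) x) z


namespace CFourProof
open Polynomial Finset

def w (v : Fin 4 → Bool) : ℕ := (Finset.univ.filter fun j => v j = true).card
def maj (v : Fin 4 → Bool) : Bool := decide (3 ≤ w v)
noncomputable def pB (b : Bool) : Polynomial ℕ :=
  ∑ v ∈ Finset.univ.filter (fun v => maj v = b), Polynomial.X ^ (w v)

lemma w_lt_5 (v : Fin 4 → Bool) : w v < 5 := by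
  have : w v ≤ 4 := by
    have := Finset.card_filter_le (Finset.univ : Finset (Fin 4)) (fun j => v j = true)
    simpa [w] using this
  omega

lemma pB_eq (b : Bool) : pB b = ∑ u ∈ Finset.range 5,
    ((Finset.univ.filter (fun v => maj v = b ∧ w v = u)).card : Polynomial ℕ) * Polynomial.X ^ u := by
  rw [pB, ← Finset.sum_fiberwise_of_maps_to (t := Finset.range 5)
    (fun v _ => Finset.mem_range.2 (w_lt_5 v)) (fun v => (Polynomial.X : Polynomial ℕ) ^ (w v))]
  refine Finset.sum_congr rfl fun u _ => ?_
  rw [Finset.filter_filter]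
  rw [Finset.sum_congr rfl (fun v hv => ?_), Finset.sum_const, nsmul_eq_mul]
  simp only [Finset.mem_filter] at hv
  rw [hv.2.2]

lemma card_tt : (Finset.univ.filter (fun v => maj v = true ∧ w v = 3)).card = 4 := by decide
lemma pB_true : pB true = 4 * Polynomial.X ^ 3 + Polynomial.X ^ 4 := by
  rw [pB_eq]
  have h0 : (Finset.univ.filter (fun v => maj v = true ∧ w v = 0)).card = 0 := by decide
  have h1 : (Finset.univ.filter (fun v => maj v = true ∧ w v = 1)).card = 0 := by decide
  have h2 : (Finset.univ.filter (fun v => maj v = true ∧ w v = 2)).card = 0 := by decide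
  have h3 : (Finset.univ.filter (fun v => maj v = true ∧ w v = 3)).card = 4 := by decide
  have h4 : (Finset.univ.filter (fun v => maj v = true ∧ w v = 4)).card = 1 := by decide
  rw [show (5:ℕ) = 4+1 from rfl, Finset.sum_range_succ, Finset.sum_range_succ,
    Finset.sum_range_succ, Finset.sum_range_succ, Finset.sum_range_one, h0, h1, h2, h3, h4]
  push_cast
  ring

lemma pB_false : pB false = 1 + 4 * Polynomial.X + 6 * Polynomial.X ^ 2 := by
  rw [pB_eq]
  have h0 : (Finset.univ.filter (fun v => maj v = false ∧ w v = 0)).card = 1 := by decide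
  have h1 : (Finset.univ.filter (fun v => maj v = false ∧ w v = 1)).card = 4 := by decide
  have h2 : (Finset.univ.filter (fun v => maj v = false ∧ w v = 2)).card = 6 := by decide
  have h3 : (Finset.univ.filter (fun v => maj v = false ∧ w v = 3)).card = 0 := by decide
  have h4 : (Finset.univ.filter (fun v => maj v = false ∧ w v = 4)).card = 0 := by decide
  rw [Finset.sum_range_succ, Finset.sum_range_succ,
    Finset.sum_range_succ, Finset.sum_range_succ, Finset.sum_range_one, h0, h1, h2, h3, h4]
  push_cast
  ring


def e (n : ℕ) : Fin (4 ^ n) × Fin 4 ≃ Fin (4 ^ (n + 1)) :=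
  finProdFinEquiv.trans (finCongr (by rw [pow_succ]))

lemma e_val (n : ℕ) (i : Fin (4 ^ n)) (j : Fin 4) :
    ((e n (i, j)) : ℕ) = 4 * (i : ℕ) + (j : ℕ) := by
  have : ((e n (i, j)) : ℕ) = (j : ℕ) + 4 * (i : ℕ) := rfl
  omega

def E (n : ℕ) : (Fin (4 ^ (n + 1)) → Bool) ≃ (Fin (4 ^ n) → Fin 4 → Bool) :=
  ((e n).arrowCongr (Equiv.refl Bool)).symm.trans (Equiv.curry _ _ _)

lemma E_apply (n : ℕ) (Z : Fin (4 ^ (n + 1)) → Bool) (i : Fin (4 ^ n)) (j : Fin 4) :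
    E n Z i j = Z (e n (i, j)) := rfl

lemma piMap_eq (n : ℕ) (Z : Fin (4 ^ (n + 1)) → Bool) (i : Fin (4 ^ n)) :
    piMap 4 n Z i = maj (E n Z i) := by
  unfold piMap maj w
  rw [decide_eq_decide]
  rw [show sPrime 4 = 3 from rfl]
  refine (fun a b (h : a = b) => by omega : ∀ a b : ℕ, a = b → (3 ≤ a ↔ 3 ≤ b)) _ _ ?_
  rw [Finset.card_filter, Finset.card_filter]
  refine Finset.sum_congr rfl fun j _ => ?_
  rw [E_apply]
  have hqe : (e n (i, j)) = ⟨4 * (i:ℕ) + (j:ℕ), by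
      have h2 := (e n (i,j)).isLt; rw [e_val] at h2; exact h2⟩ := Fin.ext (e_val n i j)
  rw [hqe]

lemma cfgCard_eq (n : ℕ) (Z : Fin (4 ^ (n + 1)) → Bool) :
    cfgCard Z = ∑ i, w (E n Z i) := by
  unfold cfgCard
  rw [Finset.card_filter, ← Equiv.sum_comp (e n) (fun q => if Z q = true then 1 else 0),
    Fintype.sum_prod_type]
  refine Finset.sum_congr rfl fun i _ => ?_
  rw [w, Finset.card_filter]
  rfl

lemma count_eq (m z : ℕ) (χ : Fin m → Bool) :
    (Finset.univ.filter fun g : Fin m → Fin 4 → Bool =>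
       (∀ i, maj (g i) = χ i) ∧ (∑ i, w (g i)) = z).card
    = (∏ i, pB (χ i)).coeff z := by
  have h1 : ∏ i, pB (χ i)
      = ∑ g ∈ Fintype.piFinset (fun i => Finset.univ.filter fun v => maj v = χ i),
          (Polynomial.X : Polynomial ℕ) ^ (∑ i, w (g i)) := by
    simp only [pB]
    rw [Finset.prod_univ_sum]
    exact Finset.sum_congr rfl fun g _ => Finset.prod_pow_eq_pow_sum _ _ _
  rw [h1, Polynomial.finset_sum_coeff]
  simp only [Polynomial.coeff_X_pow]
  rw [← Finset.card_filter]
  congr 1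
  ext g
  simp only [Finset.mem_filter, Fintype.mem_piFinset, Finset.mem_univ, true_and]
  constructor
  · rintro ⟨h1, h2⟩; exact ⟨fun i => (h1 i), h2.symm⟩
  · rintro ⟨h1, h2⟩; exact ⟨fun i => (h1 i), h2.symm⟩

lemma cFix_eq_coeff (n x z : ℕ) :
    cFix 4 n x z = (∏ i, pB (stdCfg (4 ^ n) x i)).coeff z := by
  rw [cFix, cCount, ← count_eq]
  apply Finset.card_equiv (E n)
  intro Z
  simp only [Finset.mem_filter, Finset.mem_univ, true_and]
  rw [cfgCard_eq n Z, funext_iff]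
  constructor
  · rintro ⟨h1, h2⟩
    exact ⟨fun i => (piMap_eq n Z i).symm.trans (h2 i), h1⟩
  · rintro ⟨h1, h2⟩
    exact ⟨h2, fun i => (piMap_eq n Z i).trans (h1 i)⟩

lemma prod_pB (m x : ℕ) (hx : x ≤ m) :
    (∏ i : Fin m, pB (stdCfg m x i)) = pB true ^ x * pB false ^ (m - x) := by
  have h1 : ∀ i : Fin m, pB (stdCfg m x i)
      = if (i : ℕ) < x then pB true else pB false := by
    intro i; by_cases h : (i : ℕ) < x <;> simp [stdCfg, h]
  rw [Finset.prod_congr rfl (fun i _ => h1 i), Finset.prod_ite, Finset.prod_const,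
    Finset.prod_const]
  have hc : (Finset.univ.filter fun i : Fin m => (i : ℕ) < x).card = x := by
    rw [Finset.card_filter, Fin.sum_univ_eq_sum_range (fun i => if i < x then 1 else 0) m,
      ← Finset.card_filter,
      show Finset.filter (fun i => i < x) (Finset.range m) = Finset.range x by
        ext a; simp only [Finset.mem_filter, Finset.mem_range]; omega]
    exact Finset.card_range x
  have hc2 : (Finset.univ.filter fun i : Fin m => ¬ ((i : ℕ) < x)).card = m - x := by
    have h3 := Finset.card_filter_add_card_filter_not
      (s := (Finset.univ : Finset (Fin m))) (p := fun i : Fin m => (i : ℕ) < x)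
    simp only [Finset.card_univ, Fintype.card_fin] at h3
    omega
  rw [hc, hc2]

def trm (a b : ℕ) (p : ℕ × ℕ × ℕ) : ℕ :=
  a.choose p.1 * b.choose p.2.1 * (b - p.2.1).choose p.2.2 * 4 ^ (a - p.1 + p.2.2) * 6 ^ p.2.1

lemma sum3_ext (f : ℕ → ℕ → ℕ → ℕ) (p q r L : ℕ) (hp : p ≤ L) (hq : q ≤ L) (hr : r ≤ L)
    (h1 : ∀ i j k, p ≤ i → f i j k = 0) (h2 : ∀ i j k, q ≤ j → f i j k = 0)
    (h3 : ∀ i j k, r ≤ k → f i j k = 0) :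
    ∑ i ∈ Finset.range p, ∑ j ∈ Finset.range q, ∑ k ∈ Finset.range r, f i j k
      = ∑ i ∈ Finset.range L, ∑ j ∈ Finset.range L, ∑ k ∈ Finset.range L, f i j k := by
  have hk : ∀ i j, ∑ k ∈ Finset.range r, f i j k = ∑ k ∈ Finset.range L, f i j k := fun i j =>
    Finset.sum_subset (Finset.range_subset_range.2 hr)
      (fun k _ hkk => h3 i j k (by simpa using hkk))
  have hj : ∀ i, ∑ j ∈ Finset.range q, ∑ k ∈ Finset.range L, f i j k
      = ∑ j ∈ Finset.range L, ∑ k ∈ Finset.range L, f i j k := fun i =>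
    Finset.sum_subset (Finset.range_subset_range.2 hq)
      (fun j _ hjj => Finset.sum_eq_zero fun k _ => h2 i j k (by simpa using hjj))
  have hi : ∑ i ∈ Finset.range p, ∑ j ∈ Finset.range L, ∑ k ∈ Finset.range L, f i j k
      = ∑ i ∈ Finset.range L, ∑ j ∈ Finset.range L, ∑ k ∈ Finset.range L, f i j k :=
    Finset.sum_subset (Finset.range_subset_range.2 hp)
      (fun i _ hii => Finset.sum_eq_zero fun j _ => Finset.sum_eq_zero fun k _ =>
        h1 i j k (by simpa using hii))
  calc ∑ i ∈ Finset.range p, ∑ j ∈ Finset.range q, ∑ k ∈ Finset.range r, f i j k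
      = ∑ i ∈ Finset.range p, ∑ j ∈ Finset.range q, ∑ k ∈ Finset.range L, f i j k :=
        Finset.sum_congr rfl fun i _ => Finset.sum_congr rfl fun j _ => hk i j
    _ = ∑ i ∈ Finset.range p, ∑ j ∈ Finset.range L, ∑ k ∈ Finset.range L, f i j k :=
        Finset.sum_congr rfl fun i _ => hj i
    _ = _ := hi

lemma poly_coeff (a b y : ℕ) :
    ((4 * Polynomial.X ^ 3 + Polynomial.X ^ 4 : Polynomial ℕ) ^ a
      * (1 + 4 * Polynomial.X + 6 * Polynomial.X ^ 2) ^ b).coeff (3 * a + y)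
    = ∑ t ∈ (Finset.range (y+1) ×ˢ Finset.range (y+1) ×ˢ Finset.range (y+1)).filter
        (fun t => t.1 + 2 * t.2.1 + t.2.2 = y), trm a b t := by
  have hsplit : (4 * Polynomial.X ^ 3 + Polynomial.X ^ 4 : Polynomial ℕ)
      = Polynomial.X ^ 3 * (Polynomial.X + 4) := by ring
  rw [hsplit, mul_pow, ← pow_mul, mul_assoc, add_comm (3*a) y, Polynomial.coeff_X_pow_mul]
  have hA : (Polynomial.X + 4 : Polynomial ℕ) ^ a
      = ∑ i ∈ Finset.range (a+1),
          Polynomial.X ^ i * (4 : Polynomial ℕ) ^ (a-i) * (a.choose i : Polynomial ℕ) :=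
    add_pow _ _ _
  have hB : (1 + 4 * Polynomial.X + 6 * Polynomial.X ^ 2 : Polynomial ℕ) ^ b
      = ∑ j ∈ Finset.range (b+1), ∑ k ∈ Finset.range (b+1),
          (6 * Polynomial.X ^ 2) ^ j * ((4 * Polynomial.X) ^ k * ((b-j).choose k : Polynomial ℕ))
            * (b.choose j : Polynomial ℕ) := by
    have h1 : (1 + 4 * Polynomial.X + 6 * Polynomial.X ^ 2 : Polynomial ℕ)
        = 6 * Polynomial.X ^ 2 + (1 + 4 * Polynomial.X) := by ring
    rw [h1, add_pow]
    refine Finset.sum_congr rfl fun j hj => ?_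
    have hj' : j ≤ b := by
      have := Finset.mem_range.mp hj; omega
    have h2 : (1 + 4 * Polynomial.X : Polynomial ℕ) ^ (b - j)
        = ∑ k ∈ Finset.range (b+1), (4 * Polynomial.X) ^ k * ((b-j).choose k : Polynomial ℕ) := by
      have h3 : (1 + 4 * Polynomial.X : Polynomial ℕ) = 4 * Polynomial.X + 1 := by ring
      rw [h3, add_pow]
      rw [← Finset.sum_subset (Finset.range_subset_range.2 (by omega : b - j + 1 ≤ b + 1)) ?hz]
      · exact Finset.sum_congr rfl fun k _ => by rw [one_pow, mul_one]
      · intro k hk hk2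
        simp only [Finset.mem_range] at hk hk2
        rw [Nat.choose_eq_zero_of_lt (by omega)]
        simp
    rw [h2, Finset.mul_sum, Finset.sum_mul]
  rw [hA, hB, Finset.sum_mul_sum]
  simp only [Finset.mul_sum]
  have hmod : ∀ i j k : ℕ,
      Polynomial.X ^ i * (4 : Polynomial ℕ) ^ (a-i) * (a.choose i : Polynomial ℕ) *
        ((6 * Polynomial.X ^ 2) ^ j *
          ((4 * Polynomial.X) ^ k * ((b-j).choose k : Polynomial ℕ))
            * (b.choose j : Polynomial ℕ))
      = ((a.choose i * b.choose j * (b-j).choose k * 4 ^ (a-i+k) * 6 ^ j : ℕ) : Polynomial ℕ)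
          * Polynomial.X ^ (i + 2*j + k) := by
    intro i j k
    push_cast [pow_add]
    ring
  simp only [hmod, Polynomial.finset_sum_coeff, Polynomial.coeff_natCast_mul,
    Polynomial.coeff_X_pow, mul_ite, mul_one, mul_zero]
  -- now a triple nested sum of ite
  conv_rhs => rw [Finset.sum_filter]; simp only [Finset.sum_product]
  simp only [Nat.cast_id]
  set L := a + b + y + 2 with hL
  rw [sum3_ext _ _ _ _ L (by omega) (by omega) (by omega)
      (fun i j k hi => by
        rw [Nat.choose_eq_zero_of_lt (by omega : a < i)]
        simp
      )
      (fun i j k hj => by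
        rw [Nat.choose_eq_zero_of_lt (by omega : b < j)]
        simp
      )
      (fun i j k hk => by
        rw [Nat.choose_eq_zero_of_lt (by omega : b - j < k)]
        simp
      )]
  conv_rhs => rw [sum3_ext _ _ _ _ L (by omega) (by omega) (by omega)
      (fun i j k hi => by
        rw [if_neg (by omega)]
      )
      (fun i j k hj => by
        rw [if_neg (by omega)]
      )
      (fun i j k hk => by
        rw [if_neg (by omega)]
      )]
  refine Finset.sum_congr rfl fun i _ => Finset.sum_congr rfl fun j _ =>
    Finset.sum_congr rfl fun k _ => ?_
  simp only [trm]
  exact if_congr eq_comm rfl rfl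

end CFourProof

/-- Size-4 transition counts: for group size `s = 4` (so `s' = 3`),
`c_n(4, x, 3x + y) = Σ_{i+2j+k=y} C(x,i) C(4^n-x, j) C(4^n-x-j, k) 4^{x-i+k} 6^j`. -/
theorem cFix_four (n x y : ℕ) (hx : x ≤ 4 ^ n) (hy : y ≤ 2 * 4 ^ n - x) :
    cFix 4 n x (3 * x + y)
      = ∑ t ∈ (Finset.range (y + 1) ×ˢ Finset.range (y + 1) ×ˢ
            Finset.range (y + 1)).filter
            (fun t => t.1 + 2 * t.2.1 + t.2.2 = y),
          x.choose t.1 * (4 ^ n - x).choose t.2.1 * (4 ^ n - x - t.2.1).choose t.2.2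
            * 4 ^ (x - t.1 + t.2.2) * 6 ^ t.2.1 := by
  rw [CFourProof.cFix_eq_coeff n x (3 * x + y),
    CFourProof.prod_pB _ _ hx, CFourProof.pB_true, CFourProof.pB_false,
    CFourProof.poly_coeff]
  simp only [CFourProof.trm]
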